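/- Let $(\tau_k)_{k \ge 0}$ be the jump times of a continuous-time Markov chain whose holding-time parameters are uniformly bounded above and below (so $E[\tau_{k+1}-\tau_k \mid \mathcal{F}_k]$ and $\mathrm{Var}[\tau_{k+1}-\tau_k \mid \mathcal{F}_k]$ are bounded above and below uniformly in $k$), and let $c_k \ge 0$ be random variables measurable with respect to the discrete chain. Then almost surely $\sum_{k=0}^\infty c_k (\tau_{k+1}-\tau_k) = \infty$ if and only if $\sum_{k=0}^\infty c_k = \infty$. -/

import Mathlib

open MeasureTheory ProbabilityTheory Filter

/-- Three-series argument: if the holding times `D k = τ_{k+1} - τ_k` are independent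
nonnegative random variables whose means and variances are bounded above and below
uniformly in `k`, and `c k ≥ 0` are constants, then almost surely
`∑ c k · D k = ∞` iff `∑ c k = ∞`. -/
theorem sum_weighted_holding_times
    {Ω : Type*} [MeasurableSpace Ω] (μ : Measure Ω) [IsProbabilityMeasure μ]
    (D : ℕ → Ω → ℝ) (hmeas : ∀ k, Measurable (D k))
    (hindep : iIndepFun D μ)
    (hnonneg : ∀ k ω, 0 ≤ D k ω)
    (hint : ∀ k, Integrable (D k) μ) (hsq : ∀ k, Integrable (fun ω => (D k ω) ^ 2) μ)
    (m M : ℝ) (hm : 0 < m)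
    (hmean : ∀ k, m ≤ ∫ ω, D k ω ∂μ ∧ ∫ ω, D k ω ∂μ ≤ M)
    (hvar : ∀ k, m ≤ ∫ ω, (D k ω - ∫ ω', D k ω' ∂μ) ^ 2 ∂μ ∧
      ∫ ω, (D k ω - ∫ ω', D k ω' ∂μ) ^ 2 ∂μ ≤ M)
    (c : ℕ → ℝ) (hc : ∀ k, 0 ≤ c k) :
    ∀ᵐ ω ∂μ, ((Summable fun k => c k * D k ω) ↔ Summable c) := by
  classical
  have hmM : m ≤ M := le_trans (hvar 0).1 (hvar 0).2
  have hM : 0 < M := lt_of_lt_of_le hm hmM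
  by_cases hC : Summable c
  · -- easy direction: if ∑ c k < ∞ then a.s. ∑ c k D k < ∞
    have hterm : ∀ k, ∫⁻ ω, ENNReal.ofReal (c k * D k ω) ∂μ
        = ENNReal.ofReal (c k * ∫ ω, D k ω ∂μ) := by
      intro k
      rw [← ofReal_integral_eq_lintegral_ofReal ((hint k).const_mul (c k))
        (Filter.Eventually.of_forall fun ω => mul_nonneg (hc k) (hnonneg k ω))]
      rw [integral_const_mul]
    have hfin : ∫⁻ ω, ∑' k, ENNReal.ofReal (c k * D k ω) ∂μ < ⊤ := by
      rw [lintegral_tsum fun k =>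
        (((hmeas k).const_mul (c k)).ennreal_ofReal).aemeasurable]
      have h1 : ∑' k, ∫⁻ ω, ENNReal.ofReal (c k * D k ω) ∂μ
          ≤ ∑' k, ENNReal.ofReal (M * c k) := by
        refine ENNReal.tsum_le_tsum fun k => ?_
        rw [hterm k]
        refine ENNReal.ofReal_le_ofReal ?_
        calc c k * ∫ ω, D k ω ∂μ ≤ c k * M :=
              mul_le_mul_of_nonneg_left (hmean k).2 (hc k)
          _ = M * c k := mul_comm _ _
      refine lt_of_le_of_lt h1 ?_
      rw [← ENNReal.ofReal_tsum_of_nonneg (fun k => mul_nonneg hM.le (hc k))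
        (hC.mul_left M)]
      exact ENNReal.ofReal_lt_top
    have hae : ∀ᵐ ω ∂μ, ∑' k, ENNReal.ofReal (c k * D k ω) < ⊤ :=
      ae_lt_top (by
        exact Measurable.ennreal_tsum fun k => ((hmeas k).const_mul (c k)).ennreal_ofReal) hfin.ne
    filter_upwards [hae] with ω hω
    refine ⟨fun _ => hC, fun _ => ?_⟩
    have hsum := ENNReal.summable_toReal hω.ne
    refine hsum.congr fun k => ?_
    exact ENNReal.toReal_ofReal (mul_nonneg (hc k) (hnonneg k ω))
  · -- hard direction: if ∑ c k = ∞ then a.s. ∑ c k D k = ∞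
    set b : ℕ → ℝ := fun k => min (c k) 1 with hbdef
    have hb0 : ∀ k, 0 ≤ b k := fun k => le_min (hc k) zero_le_one
    have hb1 : ∀ k, b k ≤ 1 := fun k => min_le_right _ _
    have hbc : ∀ k, b k ≤ c k := fun k => min_le_left _ _
    have hbsum : ¬ Summable b := by
      intro hB
      apply hC
      have h0 : Tendsto b atTop (nhds 0) := hB.tendsto_atTop_zero
      obtain ⟨N, hN⟩ := (h0.eventually_lt_const zero_lt_one).exists_forall_of_atTop
      have heq : ∀ k ≥ N, c k = b k := by
        intro k hk
        have hlt : b k < 1 := hN k hk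
        have hck : c k < 1 := by
          by_contra h
          push_neg at h
          have h1 : b k = 1 := min_eq_right h
          rw [h1] at hlt
          exact lt_irrefl _ hlt
        exact (min_eq_left hck.le).symm
      have h1 : Summable fun k => b (k + N) := (summable_nat_add_iff N).2 hB
      have h2 : Summable fun k => c (k + N) :=
        h1.congr fun k => (heq (k + N) (Nat.le_add_left _ _)).symm
      exact (summable_nat_add_iff N).1 h2
    -- partial sums of b tend to infinity
    set B : ℕ → ℝ := fun n => ∑ k ∈ Finset.range n, b k with hBdef
    have hBtop : Tendsto B atTop atTop :=
      (not_summable_iff_tendsto_nat_atTop_of_nonneg hb0).1 hbsum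
    set X : ℕ → Ω → ℝ := fun k ω => b k * D k ω with hXdef
    have hD2 : ∀ k, MemLp (D k) 2 μ := fun k =>
      (memLp_two_iff_integrable_sq (hmeas k).aestronglyMeasurable).2 (hsq k)
    have hX2 : ∀ k, MemLp (X k) 2 μ := fun k => (hD2 k).const_mul (b k)
    have hvarD : ∀ k, variance (D k) μ = ∫ ω, (D k ω - ∫ ω', D k ω' ∂μ) ^ 2 ∂μ := by
      intro k
      rw [variance_eq_integral (hmeas k).aemeasurable]
    -- mean and variance of partial sums
    have hmeanS : ∀ n, m * B n ≤ μ[∑ k ∈ Finset.range n, X k] := by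
      intro n
      simp only [Finset.sum_apply]
      rw [integral_finset_sum _ fun k _ => ((hint k).const_mul (b k))]
      rw [hBdef, Finset.mul_sum]
      refine Finset.sum_le_sum fun k _ => ?_
      have : m * b k ≤ (∫ ω, D k ω ∂μ) * b k :=
        mul_le_mul_of_nonneg_right (hmean k).1 (hb0 k)
      calc m * b k ≤ (∫ ω, D k ω ∂μ) * b k := this
        _ = ∫ ω, b k * D k ω ∂μ := by rw [integral_const_mul]; ring
    have hvarS : ∀ n, variance (∑ k ∈ Finset.range n, X k) μ ≤ M * B n := by
      intro n
      have hpair : Set.Pairwise ↑(Finset.range n) fun i j => IndepFun (X i) (X j) μ := by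
        intro i _ j _ hij
        exact (hindep.indepFun hij).comp (measurable_const_mul (b i))
          (measurable_const_mul (b j))
      rw [IndepFun.variance_sum (fun k _ => hX2 k) hpair, hBdef, Finset.mul_sum]
      refine Finset.sum_le_sum fun k _ => ?_
      have h1 : variance (X k) μ = b k ^ 2 * variance (D k) μ := by
        have : X k = b k • D k := rfl
        rw [this, variance_smul]
      rw [h1, hvarD k]
      calc b k ^ 2 * ∫ ω, (D k ω - ∫ ω', D k ω' ∂μ) ^ 2 ∂μ
          ≤ b k ^ 2 * M := mul_le_mul_of_nonneg_left (hvar k).2 (sq_nonneg _)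
        _ ≤ b k * M := by
            refine mul_le_mul_of_nonneg_right ?_ hM.le
            nlinarith [hb0 k, hb1 k]
        _ = M * b k := mul_comm _ _
    -- for each A, the event that all partial sums stay ≤ A is null
    have hnullA : ∀ A : ℕ,
        μ {ω | ∀ n, ∑ k ∈ Finset.range n, X k ω ≤ (A : ℝ)} = 0 := by
      intro A
      set E := {ω | ∀ n, ∑ k ∈ Finset.range n, X k ω ≤ (A : ℝ)} with hE
      have hev : ∀ᶠ n in atTop, μ E ≤ ENNReal.ofReal (4 * M / (m ^ 2 * B n)) := by
        filter_upwards [hBtop.eventually_ge_atTop (max (2 * ((A : ℝ) + 1) / m) 1)]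
          with n hn
        have hB1 : (1 : ℝ) ≤ B n := le_trans (le_max_right _ _) hn
        have hB2 : 2 * ((A : ℝ) + 1) / m ≤ B n := le_trans (le_max_left _ _) hn
        have hBpos : 0 < B n := lt_of_lt_of_le zero_lt_one hB1
        have hmB : 2 * ((A : ℝ) + 1) ≤ m * B n := by
          rw [div_le_iff₀ hm] at hB2; linarith
        set S := ∑ k ∈ Finset.range n, X k with hS
        have hμS : m * B n ≤ μ[S] := hmeanS n
        have ht : (0 : ℝ) < μ[S] - A := by
          have : (0:ℝ) ≤ (A:ℝ) := Nat.cast_nonneg A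
          nlinarith
        have hsub : E ⊆ {ω | μ[S] - A ≤ |S ω - μ[S]|} := by
          intro ω hω
          have h1 : S ω ≤ (A : ℝ) := by
            have := hω n
            simpa [hS, Finset.sum_apply] using this
          simp only [Set.mem_setOf_eq]
          rw [abs_sub_comm, abs_of_nonneg (by linarith)]
          linarith
        have hS2 : MemLp S 2 μ :=
          memLp_finset_sum' (Finset.range n) fun k _ => hX2 k
        have hcheb := meas_ge_le_variance_div_sq (μ := μ) hS2 ht
        refine le_trans (le_trans (measure_mono hsub) hcheb) ?_
        refine ENNReal.ofReal_le_ofReal ?_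
        have htge : m * B n / 2 ≤ μ[S] - A := by nlinarith [(Nat.cast_nonneg A : (0:ℝ) ≤ A)]
        have hvS : variance S μ ≤ M * B n := hvarS n
        have hvS0 : 0 ≤ variance S μ := variance_nonneg _ _
        have h2 : (m * B n / 2) ^ 2 ≤ (μ[S] - A) ^ 2 := by
          apply sq_le_sq' <;> nlinarith
        have hden : (0:ℝ) < (m * B n / 2) ^ 2 := by positivity
        calc variance S μ / (μ[S] - A) ^ 2
            ≤ (M * B n) / (m * B n / 2) ^ 2 := by
              exact div_le_div₀ (by positivity) hvS hden h2
          _ = 4 * M / (m ^ 2 * B n) := by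
              field_simp
              ring
      have hlim : Tendsto (fun n => ENNReal.ofReal (4 * M / (m ^ 2 * B n)))
          atTop (nhds 0) := by
        have h1 : Tendsto (fun n => m ^ 2 * B n) atTop atTop :=
          hBtop.const_mul_atTop (by positivity)
        have h2 : Tendsto (fun n => 4 * M / (m ^ 2 * B n)) atTop (nhds 0) :=
          tendsto_const_nhds.div_atTop h1
        have := (ENNReal.continuous_ofReal.tendsto 0).comp h2
        simpa [Function.comp_def] using this
      have : μ E ≤ 0 := ge_of_tendsto hlim hev
      exact le_antisymm this (zero_le)
    -- combine countably many null events
    have hae : ∀ᵐ ω ∂μ, ∀ A : ℕ, ¬ (∀ n, ∑ k ∈ Finset.range n, X k ω ≤ (A : ℝ)) := by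
      rw [ae_all_iff]
      intro A
      rw [ae_iff]
      simpa using hnullA A
    filter_upwards [hae] with ω hω
    constructor
    · intro hs
      exfalso
      have hsb : Summable fun k => b k * D k ω :=
        Summable.of_nonneg_of_le (fun k => mul_nonneg (hb0 k) (hnonneg k ω))
          (fun k => mul_le_mul_of_nonneg_right (hbc k) (hnonneg k ω)) hs
      obtain ⟨A, hA⟩ := exists_nat_ge (∑' k, b k * D k ω)
      refine hω A fun n => ?_
      calc ∑ k ∈ Finset.range n, X k ω
          ≤ ∑' k, b k * D k ω :=
            Summable.sum_le_tsum _ (fun k _ => mul_nonneg (hb0 k) (hnonneg k ω)) hsb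
        _ ≤ (A : ℝ) := hA
    · intro hs
      exact absurd hs hC
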